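/- Let F be a nonempty compact convex subset of ℝⁿ with support function σ_F(c) = sup_{x∈F} ⟨c, x⟩. Let c̄ ∈ ℝⁿ, let x̄ ∈ F satisfy σ_F(c̄) = ⟨c̄, x̄⟩, and suppose there exist ε > 0 and ρ > 0 with diam(F) < ρ ε such that σ_F(c) ≤ σ_F(c̄) + ⟨x̄, c − c̄⟩ + (ρ/2)‖c − c̄‖² for all c in the closed ball B(c̄, ε). Then ⟨c̄, x̄⟩ ≥ ⟨c̄, x⟩ + (1/(2ρ))‖x − x̄‖² for all x ∈ F; that is, x̄ is a strong maximizer of ⟨c̄,·⟩ over F with modulus 1/(2ρ). -/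

import Mathlib

/-- If the support function `σ_F` of a nonempty compact convex set `F` admits the upper
quadratic estimate `σ_F(c) ≤ σ_F(c̄) + ⟪x̄, c − c̄⟫ + (ρ/2)‖c − c̄‖²` on the ball
`B(c̄, ε)`, where `σ_F(c̄) = ⟪c̄, x̄⟫`, `x̄ ∈ F` and `diam F < ρ ε`, then `x̄` is a strong
maximizer of `⟪c̄,·⟫` over `F` with modulus `1/(2ρ)`. -/
theorem strong_maximizer_of_quadratic_expansion (n : ℕ)
    (F : Set (EuclideanSpace ℝ (Fin n)))
    (hne : F.Nonempty) (hcomp : IsCompact F) (hconv : Convex ℝ F)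
    (cbar xbar : EuclideanSpace ℝ (Fin n)) (hxbar : xbar ∈ F)
    (ε ρ : ℝ) (hε : 0 < ε) (hρ : 0 < ρ)
    (hdiam : Metric.diam F < ρ * ε)
    (hmax : sSup ((fun x => (inner ℝ cbar x : ℝ)) '' F) = (inner ℝ cbar xbar : ℝ))
    (hquad : ∀ c ∈ Metric.closedBall cbar ε,
      sSup ((fun x => (inner ℝ c x : ℝ)) '' F) ≤
        sSup ((fun x => (inner ℝ cbar x : ℝ)) '' F) +
          (inner ℝ xbar (c - cbar) : ℝ) + ρ / 2 * ‖c - cbar‖ ^ 2) :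
    ∀ x ∈ F, (inner ℝ cbar x : ℝ) + 1 / (2 * ρ) * ‖x - xbar‖ ^ 2 ≤ inner ℝ cbar xbar := by
  intro x hx
  set u : EuclideanSpace ℝ (Fin n) := x - xbar with hu
  have hdist : ‖u‖ ≤ Metric.diam F := by
    rw [hu, ← dist_eq_norm]
    exact Metric.dist_le_diam_of_mem hcomp.isBounded hx hxbar
  set c : EuclideanSpace ℝ (Fin n) := cbar + (1/ρ) • u with hc
  have hcc : c - cbar = (1/ρ) • u := by rw [hc]; abel
  have hcball : c ∈ Metric.closedBall cbar ε := by
    rw [Metric.mem_closedBall, dist_eq_norm, hcc, norm_smul]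
    have h1 : ‖(1/ρ : ℝ)‖ = 1/ρ := by
      rw [Real.norm_eq_abs, abs_of_pos (by positivity)]
    rw [h1]
    have hd : ‖u‖ ≤ ρ * ε := le_of_lt (lt_of_le_of_lt hdist hdiam)
    rw [div_mul_eq_mul_div, one_mul, div_le_iff₀ hρ, mul_comm]
    exact hd
  have hbdd : BddAbove ((fun y => (inner ℝ c y : ℝ)) '' F) :=
    (hcomp.image (continuous_const.inner continuous_id)).bddAbove
  have hlow : (inner ℝ c x : ℝ) ≤ sSup ((fun y => (inner ℝ c y : ℝ)) '' F) :=
    le_csSup hbdd ⟨x, hx, rfl⟩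
  have hq := hquad c hcball
  rw [hmax, hcc] at hq
  have e1 : (inner ℝ c x : ℝ) = inner ℝ cbar x + (1/ρ) * inner ℝ u x := by
    rw [hc, inner_add_left, real_inner_smul_left]
  have e2 : (inner ℝ xbar ((1/ρ) • u) : ℝ) = (1/ρ) * inner ℝ xbar u := real_inner_smul_right _ _ _
  have e3 : ‖(1/ρ : ℝ) • u‖ ^ 2 = (1/ρ)^2 * ‖u‖^2 := by
    rw [norm_smul, mul_pow, Real.norm_eq_abs, sq_abs]
  have e4 : (inner ℝ u x : ℝ) - inner ℝ u xbar = ‖u‖^2 := by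
    rw [← inner_sub_right, ← hu, real_inner_self_eq_norm_sq]
  have e5 : (inner ℝ xbar u : ℝ) = inner ℝ u xbar := real_inner_comm _ _
  rw [e1] at hlow
  rw [e2, e3] at hq
  have := hlow.trans hq
  have h6 : ρ/2 * ((1/ρ)^2 * ‖u‖^2) = 1/(2*ρ) * ‖u‖^2 := by
    field_simp
  have h7 : (1/ρ) * ‖u‖^2 = 2 * (1/(2*ρ) * ‖u‖^2) := by
    field_simp
  have h8 : 1/ρ * inner ℝ u x - 1/ρ * inner ℝ xbar u = 1/ρ * ‖u‖^2 := by
    rw [e5, ← mul_sub, e4]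
  linarith [this, h6, h7, h8]
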